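/- On ℝ⁸ = ℝ³ × ℝ × ℝ³ × ℝ with the quadratic form q(x, s, y, t) = x·y + st, every subspace of the form (a,b)₊ = { (x, s, a×x + bs, −b·x) : x ∈ ℝ³, s ∈ ℝ } with a, b ∈ ℝ³ is a totally isotropic subspace of dimension 4 (maximal). -/

import Mathlib

open Matrix

/-- `ℝ⁸ = ℝ³ × ℝ × ℝ³ × ℝ`. -/
abbrev V8 : Type := (Fin 3 → ℝ) × ℝ × (Fin 3 → ℝ) × ℝ

/-- The quadratic form `q(x, s, y, t) = x·y + st` of signature `(4,4)`. -/
def q8 (p : V8) : ℝ := p.1 ⬝ᵥ p.2.2.1 + p.2.1 * p.2.2.2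

/-- The set `(a,b)₊ = { (x, s, a×x + sb, −b·x) }`. -/
def plusSet (a b : Fin 3 → ℝ) : Set V8 :=
  {p | p.2.2.1 = a ⨯₃ p.1 + p.2.1 • b ∧ p.2.2.2 = -(b ⬝ᵥ p.1)}

/-- Parametrization of `(a,b)₊` by `ℝ³ × ℝ`. -/
def Lmap (a b : Fin 3 → ℝ) : ((Fin 3 → ℝ) × ℝ) →ₗ[ℝ] V8 where
  toFun p := (p.1, p.2, a ⨯₃ p.1 + p.2 • b, -(b ⬝ᵥ p.1))
  map_add' p q := by
    refine Prod.ext rfl (Prod.ext rfl (Prod.ext ?_ ?_)) <;>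
      simp [map_add, add_smul, dotProduct_add] <;> abel
  map_smul' c p := by
    refine Prod.ext rfl (Prod.ext rfl (Prod.ext ?_ ?_)) <;>
      simp [_root_.map_smul, smul_smul, dotProduct_smul, smul_add, mul_comm]

/-- every subspace of the form `(a,b)₊` is a maximal totally isotropic
subspace of dimension 4 for `q8`. -/
theorem darboux_stmt7 (a b : Fin 3 → ℝ) (W : Submodule ℝ V8)
    (hW : (W : Set V8) = plusSet a b) :
    (∀ w ∈ W, q8 w = 0) ∧ Module.finrank ℝ W = 4 ∧
      ∀ W' : Submodule ℝ V8, (∀ w ∈ W', q8 w = 0) → W ≤ W' → W' = W := by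
  have hmem : ∀ w : V8, w ∈ W ↔ (w.2.2.1 = a ⨯₃ w.1 + w.2.1 • b ∧ w.2.2.2 = -(b ⬝ᵥ w.1)) := by
    intro w
    have : w ∈ (W : Set V8) ↔ w ∈ plusSet a b := by rw [hW]
    exact this
  have hiso : ∀ w ∈ W, q8 w = 0 := by
    intro w hw
    obtain ⟨h1, h2⟩ := (hmem w).1 hw
    simp only [q8, h1, h2]
    simp [crossProduct, dotProduct, Fin.sum_univ_three]
    ring
  refine ⟨hiso, ?_, ?_⟩
  · -- dimension
    have hrange : LinearMap.range (Lmap a b) = W := by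
      ext w
      rw [hmem]
      constructor
      · rintro ⟨p, rfl⟩; exact ⟨rfl, rfl⟩
      · rintro ⟨h1, h2⟩
        exact ⟨(w.1, w.2.1), by
          simp only [Lmap, LinearMap.coe_mk, AddHom.coe_mk]
          exact Prod.ext rfl (Prod.ext rfl (Prod.ext h1.symm h2.symm))⟩
    have hinj : Function.Injective (Lmap a b) := by
      intro p q h
      have h1 : p.1 = q.1 := congrArg (fun z : V8 => z.1) h
      have h2 : p.2 = q.2 := congrArg (fun z : V8 => z.2.1) h
      exact Prod.ext h1 h2
    have := LinearMap.finrank_range_of_inj hinj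
    rw [hrange] at this
    rw [this]
    simp [Module.finrank_prod]
  · -- maximality
    intro W' hW' hle
    refine le_antisymm ?_ hle
    intro p hp
    -- polarization: B(w,p) = 0 for all w ∈ W
    have hB : ∀ w ∈ W, w.1 ⬝ᵥ p.2.2.1 + p.1 ⬝ᵥ w.2.2.1 + w.2.1 * p.2.2.2 + p.2.1 * w.2.2.2 = 0 := by
      intro w hw
      have h1 : q8 (w + p) = 0 := hW' _ (W'.add_mem (hle hw) hp)
      have h2 : q8 w = 0 := hW' _ (hle hw)
      have h3 : q8 p = 0 := hW' _ hp
      simp only [q8, Prod.fst_add, Prod.snd_add, dotProduct_add, add_dotProduct] at h1 h2 h3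
      nlinarith [h1, h2, h3]
    rw [hmem]
    -- extract equations by choosing specific w's
    have key : ∀ x : Fin 3 → ℝ, ∀ s : ℝ,
        x ⬝ᵥ p.2.2.1 + p.1 ⬝ᵥ (a ⨯₃ x + s • b) + s * p.2.2.2 + p.2.1 * (-(b ⬝ᵥ x)) = 0 := by
      intro x s
      exact hB (x, s, a ⨯₃ x + s • b, -(b ⬝ᵥ x)) ((hmem _).2 ⟨rfl, rfl⟩)
    constructor
    · funext i
      have h := key (Pi.single i 1) 0
      fin_cases i <;>
        · simp [crossProduct, dotProduct, Fin.sum_univ_three, Pi.single_apply] at h ⊢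
          linarith
    · have h := key 0 1
      simp [dotProduct, Fin.sum_univ_three] at h ⊢
      linarith
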